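/- Let n₁, n₂, p, q be positive integers with n₁ + n₂ ≤ p and n₁ + n₂ ≤ q. Suppose A, A' ∈ M_{p,n₁}(ℂ) and C, C' ∈ M_{q,n₁}(ℂ) have rank n₁, and B, B' ∈ M_{p,n₂}(ℂ) and D, D' ∈ M_{q,n₂}(ℂ) have rank n₂, and suppose A·Cᵀ = A'·C'ᵀ and D·Bᵀ = D'·B'ᵀ. Then there exists a unique pair (g, h) of invertible complex matrices of sizes n₁×n₁ and n₂×n₂ such that A' = A·g, C' = C·(g⁻¹)ᵀ, B' = B·h, and D' = D·(h⁻¹)ᵀ. -/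

import Mathlib

open Matrix

private lemma leftInv_aux {m n : ℕ} (M : Matrix (Fin m) (Fin n) ℂ) (h : M.rank = n) :
    ∃ L : Matrix (Fin n) (Fin m) ℂ, L * M = 1 := by
  have hker : LinearMap.ker M.mulVecLin = ⊥ := by
    have hr := LinearMap.finrank_range_add_finrank_ker M.mulVecLin
    rw [Matrix.rank] at h
    rw [h] at hr
    simp only [Module.finrank_pi, Fintype.card_fin] at hr
    have : Module.finrank ℂ (LinearMap.ker M.mulVecLin) = 0 := by omega
    exact Submodule.finrank_eq_zero.mp this
  obtain ⟨f, hf⟩ := M.mulVecLin.exists_leftInverse_of_injective hker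
  refine ⟨LinearMap.toMatrix' f, ?_⟩
  apply Matrix.toLin'.injective
  rw [Matrix.toLin'_mul, Matrix.toLin'_toMatrix']
  show f.comp M.mulVecLin = _
  rw [hf]
  simp [Matrix.toLin'_one]

private lemma pair_aux {m m' n : ℕ} (A A' : Matrix (Fin m) (Fin n) ℂ)
    (C C' : Matrix (Fin m') (Fin n) ℂ)
    (hA : A.rank = n) (hA' : A'.rank = n) (hC : C.rank = n) (hC' : C'.rank = n)
    (hAC : A * Cᵀ = A' * C'ᵀ) :
    ∃! g : Matrix (Fin n) (Fin n) ℂ, IsUnit g ∧ A' = A * g ∧ C' = C * (g⁻¹)ᵀ := by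
  obtain ⟨LA, hLA⟩ := leftInv_aux A hA
  obtain ⟨LA', hLA'⟩ := leftInv_aux A' hA'
  obtain ⟨LC, hLC⟩ := leftInv_aux C hC
  obtain ⟨LC', hLC'⟩ := leftInv_aux C' hC'
  set g : Matrix (Fin n) (Fin n) ℂ := Cᵀ * LC'ᵀ with hg
  set h : Matrix (Fin n) (Fin n) ℂ := (LA' * A)ᵀ with hh
  have hAg : A' = A * g := by
    calc A' = A' * (LC' * C')ᵀ := by rw [hLC']; simp
    _ = A' * C'ᵀ * LC'ᵀ := by rw [Matrix.transpose_mul, Matrix.mul_assoc]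
    _ = A * Cᵀ * LC'ᵀ := by rw [hAC]
    _ = A * g := by rw [hg, Matrix.mul_assoc]
  have hCh : C' = C * h := by
    calc C' = C' * (LA' * A')ᵀ := by rw [hLA']; simp
    _ = C' * A'ᵀ * LA'ᵀ := by rw [Matrix.transpose_mul, Matrix.mul_assoc]
    _ = (A' * C'ᵀ)ᵀ * LA'ᵀ := by rw [Matrix.transpose_mul, Matrix.transpose_transpose]
    _ = (A * Cᵀ)ᵀ * LA'ᵀ := by rw [hAC]
    _ = C * Aᵀ * LA'ᵀ := by rw [Matrix.transpose_mul, Matrix.transpose_transpose]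
    _ = C * h := by rw [hh, Matrix.transpose_mul, Matrix.mul_assoc]
  have hgh : g * hᵀ = 1 := by
    have h1 : A * Cᵀ = A * (g * hᵀ * Cᵀ) := by
      calc A * Cᵀ = A' * C'ᵀ := hAC
      _ = (A * g) * (C * h)ᵀ := by rw [← hAg, ← hCh]
      _ = A * (g * hᵀ * Cᵀ) := by
          rw [Matrix.transpose_mul]
          simp only [Matrix.mul_assoc]
    have h2 : Cᵀ = g * hᵀ * Cᵀ := by
      have := congrArg (fun X => LA * X) h1
      simpa [← Matrix.mul_assoc, hLA] using this
    have h3 := congrArg (fun X => X * LCᵀ) h2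
    have hCLC : Cᵀ * LCᵀ = 1 := by
      rw [← Matrix.transpose_mul, hLC, Matrix.transpose_one]
    simpa [Matrix.mul_assoc, hCLC] using h3.symm
  have hgu : IsUnit g := by
    rw [Matrix.isUnit_iff_isUnit_det g]
    exact IsUnit.of_mul_eq_one hᵀ.det (by rw [← Matrix.det_mul, hgh, Matrix.det_one])
  have hginv : g⁻¹ = hᵀ := Matrix.inv_eq_right_inv hgh
  refine ⟨g, ⟨hgu, hAg, by rw [hginv, Matrix.transpose_transpose]; exact hCh⟩, ?_⟩
  rintro g' ⟨-, hAg', -⟩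
  have : LA * A' = LA * A' := rfl
  calc g' = LA * A * g' := by rw [hLA]; simp
  _ = LA * A' := by rw [hAg', Matrix.mul_assoc]
  _ = LA * A * g := by rw [hAg, Matrix.mul_assoc]
  _ = g := by rw [hLA]; simp

/-- Lemma B.2(ii) for the dual pair (U(n₁,n₂), U(p,q)):
the fiber of φ'(A,B,C,D) = (A·Cᵀ, D·Bᵀ) over a full-rank point is a single
free orbit of K_ℂ = GL(n₁,ℂ) × GL(n₂,ℂ), acting by
(g,h)·(A,B,C,D) = (A·g, B·h, C·(g⁻¹)ᵀ, D·(h⁻¹)ᵀ). -/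
theorem stmt_8 (n₁ n₂ p q : ℕ) (hn₁ : 0 < n₁) (hn₂ : 0 < n₂) (hp : 0 < p) (hq : 0 < q)
    (hsp : n₁ + n₂ ≤ p) (hsq : n₁ + n₂ ≤ q)
    (A A' : Matrix (Fin p) (Fin n₁) ℂ) (B B' : Matrix (Fin p) (Fin n₂) ℂ)
    (C C' : Matrix (Fin q) (Fin n₁) ℂ) (D D' : Matrix (Fin q) (Fin n₂) ℂ)
    (hA : A.rank = n₁) (hA' : A'.rank = n₁) (hC : C.rank = n₁) (hC' : C'.rank = n₁)
    (hB : B.rank = n₂) (hB' : B'.rank = n₂) (hD : D.rank = n₂) (hD' : D'.rank = n₂)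
    (hAC : A * Cᵀ = A' * C'ᵀ) (hDB : D * Bᵀ = D' * B'ᵀ) :
    ∃! gh : Matrix (Fin n₁) (Fin n₁) ℂ × Matrix (Fin n₂) (Fin n₂) ℂ,
      IsUnit gh.1 ∧ IsUnit gh.2 ∧
      A' = A * gh.1 ∧ C' = C * (gh.1⁻¹)ᵀ ∧
      B' = B * gh.2 ∧ D' = D * (gh.2⁻¹)ᵀ := by
  obtain ⟨g, ⟨hgu, hg1, hg2⟩, hgun⟩ := pair_aux A A' C C' hA hA' hC hC' hAC
  obtain ⟨h, ⟨hhu, hh1, hh2⟩, hhun⟩ := pair_aux D D' B B' hD hD' hB hB' hDB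
  -- note: pair_aux for (D,B) gives IsUnit h, D' = D * h, B' = B * (h⁻¹)ᵀ;
  -- we need gh.2 with B' = B * gh.2 and D' = D * (gh.2⁻¹)ᵀ, so take gh.2 = (h⁻¹)ᵀ
  have key : ∀ {n : ℕ} (u : Matrix (Fin n) (Fin n) ℂ), IsUnit u → ((u⁻¹)ᵀ)⁻¹ᵀ = u := by
    intro n u hu
    rw [← Matrix.transpose_nonsing_inv, Matrix.transpose_transpose]
    exact Matrix.nonsing_inv_nonsing_inv _ ((Matrix.isUnit_iff_isUnit_det u).mp hu)
  have keyU : ∀ {n : ℕ} (u : Matrix (Fin n) (Fin n) ℂ), IsUnit u → IsUnit (u⁻¹)ᵀ := by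
    intro n u hu
    rw [Matrix.isUnit_iff_isUnit_det, Matrix.det_transpose, Matrix.det_nonsing_inv]
    simpa using (Matrix.isUnit_iff_isUnit_det u).mp hu
  refine ⟨(g, (h⁻¹)ᵀ), ⟨hgu, keyU h hhu, hg1, hg2, hh2, ?_⟩, ?_⟩
  · show D' = D * ((h⁻¹)ᵀ⁻¹)ᵀ
    rw [key h hhu]; exact hh1
  · rintro ⟨g', h'⟩ ⟨hg'u, hh'u, e1, e2, e3, e4⟩
    have hg' : g' = g := hgun g' ⟨hg'u, e1, e2⟩
    have hh'' : (h'⁻¹)ᵀ = h := by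
      refine hhun _ ⟨keyU h' hh'u, e4, ?_⟩
      rw [key h' hh'u]; exact e3
    have hh' : h' = (h⁻¹)ᵀ := by
      rw [← hh'', key h' hh'u]
    exact Prod.ext hg' hh'
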